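/- Let a, b be two points on a line L in ℝ², let q be the midpoint of [a,b], and let c be a point not on L. Then there exists a right-angled triangle whose hypotenuse is a closed subsegment of the open segment (a,b) and whose third vertex (with the right angle) is c if and only if dist(c,q) < dist(q,a), i.e., c lies in the open disk with centre q and radius dist(q,a). -/

import Mathlib

open Classical MeasureTheory
noncomputable section

/-- Points of the Euclidean plane. -/
abbrev Pt := EuclideanSpace ℝ (Fin 2)

/-- A finite point set `H` hits every member of the family `F`. -/
def Hits (H : Finset Pt) (F : Finset (Set Pt)) : Prop := ∀ S ∈ F, ∃ p ∈ H, p ∈ S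

/-- The hitting number τ of a family. -/
def hitNum (F : Finset (Set Pt)) : ℕ := sInf {n | ∃ H : Finset Pt, H.card = n ∧ Hits H F}

/-- The packing number ν of a family. -/
def packNum (F : Finset (Set Pt)) : ℕ :=
  sSup {n | ∃ P ⊆ F, P.card = n ∧ (P : Set (Set Pt)).Pairwise Disjoint}

/-- The maximum degree Δ of a family: the maximum number of members containing a common point. -/
def maxDeg (F : Finset (Set Pt)) : ℕ :=
  sSup {n | ∃ p : Pt, (F.filter fun S => p ∈ S).card = n}

/-- The chromatic number χ of the intersection graph of a family. -/
def chromNum (F : Finset (Set Pt)) : ℕ :=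
  sInf {n | ∃ col : Set Pt → ℕ, (∀ S ∈ F, col S < n) ∧
    ∀ S ∈ F, ∀ T ∈ F, S ≠ T → (S ∩ T).Nonempty → col S ≠ col T}

/-- Hitting-`t`-degeneracy: every nonempty subfamily has a member whose closed
neighbourhood within the subfamily can be hit by at most `t` points. -/
def HitDeg (t : ℕ) (F : Finset (Set Pt)) : Prop :=
  ∀ F' ⊆ F, F'.Nonempty → ∃ S ∈ F',
    hitNum (F'.filter fun T => (T ∩ S).Nonempty) ≤ t

/-- `D`-degeneracy of a family: every nonempty subfamily has a member intersecting
at most `D` other members of the subfamily. -/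
def FamDeg (D : ℕ) (F : Finset (Set Pt)) : Prop :=
  ∀ F' ⊆ F, F'.Nonempty → ∃ S ∈ F',
    (F'.filter fun T => T ≠ S ∧ (T ∩ S).Nonempty).card ≤ D

theorem stmt_7 (a b c : Pt) (hab : a ≠ b) (hc : c ∉ affineSpan ℝ ({a, b} : Set Pt)) :
    (∃ a' b' : Pt, a' ∈ openSegment ℝ a b ∧ b' ∈ openSegment ℝ a b ∧ a' ≠ b' ∧
        (inner ℝ (a' - c) (b' - c) : ℝ) = 0) ↔
      dist c (midpoint ℝ a b) < dist (midpoint ℝ a b) a := by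
  set q := midpoint ℝ a b with hqdef
  have hba : b - a ≠ 0 := sub_ne_zero.2 (Ne.symm hab)
  have hL : (0:ℝ) < ‖b - a‖ := norm_pos_iff.2 hba
  have haS : a ∈ affineSpan ℝ ({a, b} : Set Pt) :=
    subset_affineSpan ℝ _ (by simp)
  have hbS : b ∈ affineSpan ℝ ({a, b} : Set Pt) :=
    subset_affineSpan ℝ _ (by simp)
  have hq' : q = a + ((1:ℝ)/2) • (b - a) := by
    rw [hqdef, midpoint_eq_smul_add, invOf_eq_inv]; module
  have hqS : q ∈ affineSpan ℝ ({a, b} : Set Pt) := by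
    have h := AffineMap.lineMap_mem ((1:ℝ)/2) haS hbS
    have he : AffineMap.lineMap a b ((1:ℝ)/2) = q := by
      rw [hq', AffineMap.lineMap_apply_module]; module
    rwa [he] at h
  have hcq : c ≠ q := fun h => hc (h ▸ hqS)
  have hqa : dist q a = ‖b - a‖ / 2 := by
    rw [hq']
    simp [dist_eq_norm, norm_smul]
    ring
  constructor
  · rintro ⟨a', b', ha', hb', hne, hinner⟩
    rw [openSegment_eq_image'] at ha' hb'
    obtain ⟨s, hs, rfl⟩ := ha'
    obtain ⟨t, ht, rfl⟩ := hb'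
    obtain ⟨hs0, hs1⟩ := hs
    obtain ⟨ht0, ht1⟩ := ht
    set u := a + s • (b - a) - c with hu
    set v := a + t • (b - a) - c with hv
    have h1 := norm_add_sq_real u v
    have h2 := norm_sub_sq_real u v
    have h3 : ‖u + v‖ ^ 2 = ‖u - v‖ ^ 2 := by
      rw [hinner] at h1; rw [hinner] at h2; linarith
    have hsum : ‖u + v‖ = ‖u - v‖ :=
      (sq_eq_sq₀ (norm_nonneg _) (norm_nonneg _)).1 h3
    set m : Pt := a + ((s + t)/2) • (b - a) with hm
    have hcm : dist c m = ‖u - v‖ / 2 := by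
      have hmc : m - c = ((1:ℝ)/2) • (u + v) := by
        rw [hu, hv, hm]; module
      rw [dist_eq_norm, ← norm_neg, neg_sub, hmc, norm_smul, hsum]
      simp
      ring
    have huv : ‖u - v‖ = |s - t| * ‖b - a‖ := by
      have huv' : u - v = (s - t) • (b - a) := by rw [hu, hv]; module
      rw [huv', norm_smul, Real.norm_eq_abs]
    have hmq : dist m q = |(s + t - 1)/2| * ‖b - a‖ := by
      have hmq' : m - q = ((s + t - 1)/2) • (b - a) := by rw [hm, hq']; module
      rw [dist_eq_norm, hmq', norm_smul, Real.norm_eq_abs]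
    have htri : dist c q ≤ dist c m + dist m q := dist_triangle c m q
    have key : |s - t| + |s + t - 1| < 1 := by
      rcases abs_cases (s - t) with ⟨h1', _⟩ | ⟨h1', _⟩ <;>
        rcases abs_cases (s + t - 1) with ⟨h2', _⟩ | ⟨h2', _⟩ <;> linarith
    rw [hqa]
    calc dist c q ≤ dist c m + dist m q := htri
      _ = (|s - t| / 2 + |(s + t - 1)/2|) * ‖b - a‖ := by
          rw [hcm, huv, hmq]; ring
      _ < ‖b - a‖ / 2 := by
          have habs : |(s + t - 1)/2| = |s + t - 1| / 2 := by
            rw [abs_div]; norm_num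
          rw [habs]
          nlinarith
  · intro h
    rw [hqa] at h
    set d := dist c q with hd
    have hd0 : 0 < d := dist_pos.2 hcq
    set k : ℝ := d / ‖b - a‖ with hk
    have hk0 : 0 < k := div_pos hd0 hL
    have hk2 : k < 1/2 := by
      rw [hk, div_lt_iff₀ hL]; linarith [h]
    refine ⟨a + ((1:ℝ)/2 - k) • (b - a), a + ((1:ℝ)/2 + k) • (b - a), ?_, ?_, ?_, ?_⟩
    · rw [openSegment_eq_image']
      exact ⟨(1:ℝ)/2 - k, ⟨by linarith, by linarith⟩, rfl⟩
    · rw [openSegment_eq_image']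
      exact ⟨(1:ℝ)/2 + k, ⟨by linarith, by linarith⟩, rfl⟩
    · intro hEq
      have h1 : ((1:ℝ)/2 - k) • (b - a) = ((1:ℝ)/2 + k) • (b - a) :=
        add_left_cancel hEq
      have h2 : ((1:ℝ)/2 - k) = ((1:ℝ)/2 + k) := smul_left_injective ℝ hba h1
      linarith
    · have e1 : a + ((1:ℝ)/2 - k) • (b - a) - c = (q - c) - k • (b - a) := by
        rw [hq']; module
      have e2 : a + ((1:ℝ)/2 + k) • (b - a) - c = (q - c) + k • (b - a) := by
        rw [hq']; module
      rw [e1, e2]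
      have expand : (inner ℝ ((q - c) - k • (b - a)) ((q - c) + k • (b - a)) : ℝ)
          = ‖q - c‖^2 - k^2 * ‖b - a‖^2 := by
        rw [inner_sub_left, inner_add_right, inner_add_right,
          real_inner_smul_left, real_inner_smul_left,
          real_inner_smul_right, real_inner_smul_right,
          real_inner_self_eq_norm_sq, real_inner_self_eq_norm_sq,
          real_inner_comm (b - a) (q - c)]
        ring
      rw [expand]
      have hqc : ‖q - c‖ = d := by rw [hd, dist_eq_norm, ← norm_neg, neg_sub]
      have hkL : k * ‖b - a‖ = d := by rw [hk]; field_simp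
      rw [hqc, show k ^ 2 * ‖b - a‖ ^ 2 = (k * ‖b - a‖) ^ 2 by ring, hkL]
      ring
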